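/- Let V be a real vector space, let μ₂ : V × V → ℝ be a symmetric bilinear form with μ₂(f,f) ≥ 0 for all f ∈ V, and let σ : V × V → ℝ be an alternating bilinear form such that 4·μ₂(f,f)·μ₂(g,g) ≥ σ(f,g)² for all f, g ∈ V. Then for every n ∈ ℕ and every family f : Fin n → V, the complex n×n matrix M with entries M k l = exp(μ₂(f k, f l) + (i/2)·σ(f k, f l)) is positive semidefinite. -/

import Mathlib

open Complex ComplexOrder


lemma pair_id (p q r t μ s : ℝ) :
    ((starRingEnd ℂ) (↑p + ↑q*I) * ((↑μ : ℂ) + I/2*↑s) * (↑r + ↑t*I)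
        - ↑(p*r*μ + q*t*μ - p*t*s))
      + ((starRingEnd ℂ) (↑r + ↑t*I) * ((↑μ : ℂ) + I/2*↑(-s)) * (↑p + ↑q*I)
        - ↑(r*p*μ + t*q*μ - r*q*(-s))) = 0 := by
  simp only [map_add, map_mul, Complex.conj_ofReal, Complex.conj_I]
  apply Complex.ext <;> simp <;> ring

lemma bilin_expand (V : Type*) [AddCommGroup V] [Module ℝ V] (B : V →ₗ[ℝ] V →ₗ[ℝ] ℝ)
    (n : ℕ) (c d : Fin n → ℝ) (f : Fin n → V) :
    B (∑ k, c k • f k) (∑ l, d l • f l) = ∑ k, ∑ l, c k * d l * B (f k) (f l) := by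
  simp only [map_sum, map_smul, LinearMap.sum_apply, LinearMap.smul_apply, smul_eq_mul,
    Finset.mul_sum]
  rw [Finset.sum_comm]
  exact Finset.sum_congr rfl fun k _ => Finset.sum_congr rfl fun l _ => by ring

lemma quad_expand {n : ℕ} (M : Matrix (Fin n) (Fin n) ℂ) (x : Fin n → ℂ) :
    dotProduct (star x) (M.mulVec x)
      = ∑ k, ∑ l, (starRingEnd ℂ) (x k) * M k l * x l := by
  simp [dotProduct, Matrix.mulVec, Finset.mul_sum, mul_assoc]

lemma base_posSemidef
    (V : Type*) [AddCommGroup V] [Module ℝ V]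
    (μ₂ : V →ₗ[ℝ] V →ₗ[ℝ] ℝ) (σ : V →ₗ[ℝ] V →ₗ[ℝ] ℝ)
    (hsymm : ∀ f g : V, μ₂ f g = μ₂ g f)
    (hpos : ∀ f : V, 0 ≤ μ₂ f f)
    (halt : ∀ f : V, σ f f = 0)
    (hdom : ∀ f g : V, σ f g ^ 2 ≤ 4 * (μ₂ f f * μ₂ g g))
    (n : ℕ) (f : Fin n → V) :
    Matrix.PosSemidef (Matrix.of fun k l : Fin n =>
      (μ₂ (f k) (f l) : ℂ) + Complex.I / 2 * (σ (f k) (f l) : ℂ)) := by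
  have hσ : ∀ u v : V, σ v u = -σ u v := by
    intro u v
    have h := halt (u + v)
    simp only [map_add, LinearMap.add_apply, halt u, halt v] at h
    linarith
  rw [Matrix.posSemidef_iff_dotProduct_mulVec]
  constructor
  · show _ = _
    ext k l
    simp only [Matrix.conjTranspose_apply, Matrix.of_apply, hsymm (f l) (f k), hσ (f k) (f l)]
    have : ∀ μ s : ℝ, star ((μ:ℂ) + I/2 * ((-s : ℝ):ℂ)) = (μ:ℂ) + I/2 * (s:ℂ) := by
      intro μ s
      simp [Complex.star_def, map_add, map_mul, Complex.conj_ofReal, Complex.conj_I]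
      ring
    exact this _ _
  · intro x
    set a : Fin n → ℝ := fun k => (x k).re with ha
    set b : Fin n → ℝ := fun k => (x k).im with hb
    set u : V := ∑ k, a k • f k with hu
    set v : V := ∑ k, b k • f k with hv
    set g : Fin n → Fin n → ℂ := fun k l =>
      (starRingEnd ℂ) (x k) * ((μ₂ (f k) (f l) : ℂ) + I/2 * (σ (f k) (f l) : ℂ)) * x l
        - ((a k * a l * μ₂ (f k) (f l) + b k * b l * μ₂ (f k) (f l)
            - a k * b l * σ (f k) (f l) : ℝ) : ℂ) with hg
    have hpair : ∀ k l, g k l + g l k = 0 := by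
      intro k l
      have hxk : (x k : ℂ) = (a k : ℂ) + (b k : ℂ) * I := (Complex.re_add_im _).symm
      have hxl : (x l : ℂ) = (a l : ℂ) + (b l : ℂ) * I := (Complex.re_add_im _).symm
      rw [hg]
      simp only [hxk, hxl, hsymm (f l) (f k), hσ (f k) (f l)]
      exact pair_id (a k) (b k) (a l) (b l) (μ₂ (f k) (f l)) (σ (f k) (f l))
    have hgsum : ∑ k, ∑ l, g k l = 0 := by
      have h1 : ∑ k, ∑ l, g k l = ∑ k, ∑ l, g l k := Finset.sum_comm
      have h2 : (∑ k, ∑ l, g k l) + (∑ k, ∑ l, g k l) = 0 := by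
        nth_rewrite 2 [h1]
        rw [← Finset.sum_add_distrib]
        simp only [← Finset.sum_add_distrib, hpair]
        simp
      linear_combination h2 / 2
    have e1 : μ₂ u u = ∑ k, ∑ l, a k * a l * μ₂ (f k) (f l) := bilin_expand V μ₂ n a a f
    have e2 : μ₂ v v = ∑ k, ∑ l, b k * b l * μ₂ (f k) (f l) := bilin_expand V μ₂ n b b f
    have e3 : σ u v = ∑ k, ∑ l, a k * b l * σ (f k) (f l) := bilin_expand V σ n a b f
    have hquad : dotProduct (star x)
        ((Matrix.of fun k l : Fin n =>
          (μ₂ (f k) (f l) : ℂ) + Complex.I / 2 * (σ (f k) (f l) : ℂ)).mulVec x)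
        = ((μ₂ u u + μ₂ v v - σ u v : ℝ) : ℂ) := by
      rw [quad_expand]
      have step1 : ∀ k l : Fin n,
          (starRingEnd ℂ) (x k) * (Matrix.of fun k l : Fin n =>
            (μ₂ (f k) (f l) : ℂ) + Complex.I / 2 * (σ (f k) (f l) : ℂ)) k l * x l
          = g k l + ((a k * a l * μ₂ (f k) (f l) + b k * b l * μ₂ (f k) (f l)
              - a k * b l * σ (f k) (f l) : ℝ) : ℂ) := by
        intro k l
        rw [hg]
        simp only [Matrix.of_apply]
        ring
      simp only [step1, Finset.sum_add_distrib, hgsum, zero_add]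
      rw [e1, e2, e3]
      push_cast
      simp [Finset.sum_add_distrib, Finset.sum_sub_distrib]
    rw [hquad]
    have hr : (0:ℝ) ≤ μ₂ u u + μ₂ v v - σ u v := by
      nlinarith [hdom u v, hpos u, hpos v, sq_nonneg (μ₂ u u - μ₂ v v)]
    exact_mod_cast hr

lemma schur {n : ℕ} {A B : Matrix (Fin n) (Fin n) ℂ}
    (hA : A.PosSemidef) (hB : B.PosSemidef) :
    Matrix.PosSemidef (Matrix.of fun k l => A k l * B k l) := by
  obtain ⟨C, hC⟩ : ∃ C : Matrix (Fin n) (Fin n) ℂ, B = C.conjTranspose * C := by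
    open scoped MatrixOrder in
    obtain ⟨X, hX, -, hXX⟩ := sub_zero B ▸
      CFC.exists_sqrt_of_isSelfAdjoint_of_quasispectrumRestricts hB.isHermitian
        (QuasispectrumRestricts.nnreal_of_nonneg hB.nonneg)
    exact ⟨X, by rw [← sub_zero B, ← hXX]; exact congrArg (· * X) hX.symm⟩
  rw [Matrix.posSemidef_iff_dotProduct_mulVec]
  constructor
  · show _ = _
    ext k l
    simp only [Matrix.conjTranspose_apply, Matrix.of_apply, star_mul']
    rw [hA.1.apply k l, hB.1.apply k l]
  · intro x
    have key : dotProduct (star x) ((Matrix.of fun k l => A k l * B k l).mulVec x)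
        = ∑ j, dotProduct (star (fun k => C j k * x k)) (A.mulVec (fun k => C j k * x k)) := by
      simp only [quad_expand, Matrix.of_apply, hC, Matrix.mul_apply, Matrix.conjTranspose_apply,
        Finset.mul_sum, Finset.sum_mul, map_mul, RCLike.star_def]
      calc ∑ k, ∑ l, ∑ j, (starRingEnd ℂ) (x k) * (A k l * ((starRingEnd ℂ) (C j k) * C j l)) * x l
          = ∑ k, ∑ j, ∑ l, (starRingEnd ℂ) (x k) * (A k l * ((starRingEnd ℂ) (C j k) * C j l)) * x l :=
            Finset.sum_congr rfl fun k _ => Finset.sum_comm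
        _ = ∑ j, ∑ k, ∑ l, (starRingEnd ℂ) (x k) * (A k l * ((starRingEnd ℂ) (C j k) * C j l)) * x l :=
            Finset.sum_comm
        _ = _ := by
            refine Finset.sum_congr rfl fun j _ => Finset.sum_congr rfl fun k _ =>
              Finset.sum_congr rfl fun l _ => ?_
            ring
    rw [key]
    exact Finset.sum_nonneg fun j _ => hA.dotProduct_mulVec_nonneg _

lemma hadamard_pow {n : ℕ} {A : Matrix (Fin n) (Fin n) ℂ} (hA : A.PosSemidef) (m : ℕ) :
    Matrix.PosSemidef (Matrix.of fun k l => A k l ^ m) := by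
  induction m with
  | zero =>
    rw [Matrix.posSemidef_iff_dotProduct_mulVec]
    constructor
    · show _ = _
      ext k l
      simp [Matrix.conjTranspose_apply]
    · intro x
      have : dotProduct (star x) ((Matrix.of fun k l : Fin n => A k l ^ 0).mulVec x)
          = (starRingEnd ℂ) (∑ k, x k) * (∑ k, x k) := by
        simp [quad_expand, Finset.mul_sum, map_sum, Finset.sum_mul]
        exact Finset.sum_comm
      rw [this]
      exact star_mul_self_nonneg _
  | succ m ih =>
    have := schur hA ih
    rw [Matrix.posSemidef_iff_dotProduct_mulVec]
    constructor
    · show _ = _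
      ext k l
      have := congrFun (congrFun this.1 k) l
      simpa [Matrix.conjTranspose_apply, pow_succ, mul_comm] using this
    · intro x
      have h2 := this.dotProduct_mulVec_nonneg x
      convert h2 using 3
      ext k l
      simp [pow_succ, mul_comm]

lemma exp_psd {n : ℕ} {A : Matrix (Fin n) (Fin n) ℂ} (hA : A.PosSemidef) :
    Matrix.PosSemidef (Matrix.of fun k l : Fin n => Complex.exp (A k l)) := by
  rw [Matrix.posSemidef_iff_dotProduct_mulVec]
  constructor
  · show _ = _
    ext k l
    show star (Complex.exp (A l k)) = Complex.exp (A k l)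
    rw [Complex.star_def, ← Complex.exp_conj]
    congr 1
    exact hA.1.apply k l
  · intro x
    have expand : dotProduct (star x)
        ((Matrix.of fun k l : Fin n => Complex.exp (A k l)).mulVec x)
        = ∑ k, ∑ l, (starRingEnd ℂ) (x k) * Complex.exp (A k l) * x l := by
      rw [quad_expand]
      simp only [Matrix.of_apply]
    rw [expand]
    have hterm : ∀ k l : Fin n, (starRingEnd ℂ) (x k) * Complex.exp (A k l) * x l
        = ∑' m : ℕ, (starRingEnd ℂ) (x k) * (A k l ^ m / m.factorial) * x l := by
      intro k l
      rw [Complex.exp_eq_exp_ℂ, NormedSpace.exp_eq_tsum_div, ← tsum_mul_left, ← tsum_mul_right]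
    have hsummable : ∀ k l : Fin n,
        Summable (fun m : ℕ => (starRingEnd ℂ) (x k) * (A k l ^ m / m.factorial) * x l) :=
      fun k l => ((NormedSpace.expSeries_div_summable (A k l)).mul_left _).mul_right _
    calc (0:ℂ) ≤ ∑' m : ℕ, ∑ k, ∑ l,
          (starRingEnd ℂ) (x k) * (A k l ^ m / m.factorial) * x l := by
          refine tsum_nonneg fun m => ?_
          have hfac : (0:ℂ) ≤ ((m.factorial : ℂ))⁻¹ := by
            have h1 : ((m.factorial : ℂ))⁻¹ = (((m.factorial : ℝ))⁻¹ : ℂ) := by push_cast; ring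
            rw [h1]
            have h2 : (0:ℝ) ≤ ((m.factorial : ℝ))⁻¹ := by positivity
            exact_mod_cast h2
          have hpow := (hadamard_pow hA m).dotProduct_mulVec_nonneg x
          rw [quad_expand] at hpow
          have heq : ∑ k, ∑ l, (starRingEnd ℂ) (x k) * (A k l ^ m / m.factorial) * x l
              = ((m.factorial : ℂ))⁻¹ * ∑ k, ∑ l,
                (starRingEnd ℂ) (x k) * (Matrix.of fun k l => A k l ^ m) k l * x l := by
            simp only [Finset.mul_sum, Matrix.of_apply]
            refine Finset.sum_congr rfl fun k _ => Finset.sum_congr rfl fun l _ => ?_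
            rw [div_eq_mul_inv]
            ring
          rw [heq]
          exact mul_nonneg hfac hpow
      _ = ∑ k, ∑ l, (starRingEnd ℂ) (x k) * Complex.exp (A k l) * x l := by
          simp only [hterm]
          rw [Summable.tsum_finsetSum fun k _ => summable_sum fun l _ => hsummable k l]
          exact Finset.sum_congr rfl fun k _ =>
            Summable.tsum_finsetSum fun l _ => hsummable k l

/-- If `μ₂` is a positive symmetric bilinear form and `σ` an alternating bilinear form on
a real vector space satisfying `4 μ₂(f,f) μ₂(g,g) ≥ σ(f,g)²`, then the matrix with entries
`exp(μ₂(f k, f l) + (i/2) σ(f k, f l))` is positive semidefinite. -/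
theorem exp_gram_matrix_posSemidef
    (V : Type*) [AddCommGroup V] [Module ℝ V]
    (μ₂ : V →ₗ[ℝ] V →ₗ[ℝ] ℝ) (σ : V →ₗ[ℝ] V →ₗ[ℝ] ℝ)
    (hsymm : ∀ f g : V, μ₂ f g = μ₂ g f)
    (hpos : ∀ f : V, 0 ≤ μ₂ f f)
    (halt : ∀ f : V, σ f f = 0)
    (hdom : ∀ f g : V, σ f g ^ 2 ≤ 4 * (μ₂ f f * μ₂ g g))
    (n : ℕ) (f : Fin n → V) :
    Matrix.PosSemidef (fun k l : Fin n =>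
      Complex.exp ((μ₂ (f k) (f l) : ℂ) + Complex.I / 2 * (σ (f k) (f l) : ℂ))) := by
  exact exp_psd (base_posSemidef V μ₂ σ hsymm hpos halt hdom n f)
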